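/- Let p be a prime and let 𝓕 be a family of 2p-element subsets of {1,2,…,4p} such that no two members of 𝓕 overlap in exactly p elements. Then the number of members of 𝓕 is at most (1/2)·C(4p, p). -/

import Mathlib

open Finset

set_option linter.unusedSectionVars false

namespace FWaux

variable {p : ℕ} [Fact p.Prime] {α : Type*} [DecidableEq α]

def mon (p : ℕ) (I : Finset α) : Finset α → ZMod p := fun T => if I ⊆ T then 1 else 0

lemma mon_mul (I J : Finset α) : mon p I * mon p J = mon p (I ∪ J) := by
  funext T
  simp only [Pi.mul_apply, mon, union_subset_iff]
  by_cases h1 : I ⊆ T <;> by_cases h2 : J ⊆ T <;> simp [h1, h2]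

lemma mon_empty : mon p (∅ : Finset α) = 1 := by
  funext T; simp [mon]

def Sp (p : ℕ) (Ω : Finset α) (d : ℕ) : Submodule (ZMod p) (Finset α → ZMod p) :=
  Submodule.span (ZMod p) (mon p '' {I : Finset α | I ⊆ Ω ∧ I.card ≤ d})

lemma Sp_mono (Ω : Finset α) {d e : ℕ} (h : d ≤ e) : Sp p Ω d ≤ Sp p Ω e :=
  Submodule.span_mono (Set.image_mono (fun _ hI => ⟨hI.1, hI.2.trans h⟩))

lemma mon_mem_Sp {Ω I : Finset α} {d : ℕ} (h1 : I ⊆ Ω) (h2 : I.card ≤ d) :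
    mon p I ∈ Sp p Ω d :=
  Submodule.subset_span ⟨I, ⟨h1, h2⟩, rfl⟩

lemma one_mem_Sp (Ω : Finset α) (d : ℕ) : (1 : Finset α → ZMod p) ∈ Sp p Ω d := by
  rw [← mon_empty]; exact mon_mem_Sp (empty_subset _) (Nat.zero_le _)

lemma mul_mem_Sp {Ω : Finset α} {d e : ℕ} {f g : Finset α → ZMod p}
    (hf : f ∈ Sp p Ω d) (hg : g ∈ Sp p Ω e) : f * g ∈ Sp p Ω (d + e) := by
  have h := Submodule.mul_mem_mul hf hg
  rw [Sp, Sp, Submodule.span_mul_span] at h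
  refine Submodule.span_le.mpr ?_ h
  rintro x hx
  rw [Set.mem_mul] at hx
  obtain ⟨a, ha, b, hb, rfl⟩ := hx
  obtain ⟨I, hI, rfl⟩ := ha
  obtain ⟨J, hJ, rfl⟩ := hb
  rw [mon_mul]
  exact mon_mem_Sp (union_subset hI.1 hJ.1)
    ((card_union_le I J).trans (Nat.add_le_add hI.2 hJ.2))

lemma card_inter_eq_sum (G T : Finset α) :
    ((G ∩ T).card : ZMod p) = ∑ i ∈ G, mon p {i} T := by
  simp only [mon, singleton_subset_iff, sum_boole]
  rw [filter_mem_eq_inter]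

lemma affine_mem_Sp {Ω : Finset α} (A : Finset α) (hA : A ⊆ Ω) (c : ZMod p) :
    (fun T => ((A ∩ T).card : ZMod p) + c) ∈ Sp p Ω 1 := by
  have : (fun T => ((A ∩ T).card : ZMod p) + c)
      = (∑ i ∈ A, mon p {i}) + c • (1 : Finset α → ZMod p) := by
    funext T
    simp [card_inter_eq_sum, Finset.sum_apply]
  rw [this]
  refine Submodule.add_mem _ (Submodule.sum_mem _ fun i hi => ?_)
    (Submodule.smul_mem _ _ (one_mem_Sp Ω 1))
  exact mon_mem_Sp (singleton_subset_iff.mpr (hA hi)) (by simp)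

lemma prod_mem_Sp {Ω : Finset α} {β : Type*} [DecidableEq β] (s : Finset β)
    (f : β → (Finset α → ZMod p)) (h : ∀ b ∈ s, f b ∈ Sp p Ω 1) :
    ∏ b ∈ s, f b ∈ Sp p Ω s.card := by
  induction s using Finset.cons_induction with
  | empty => simpa using one_mem_Sp Ω 0
  | cons a s ha ih =>
    rw [prod_cons, card_cons]
    have := mul_mem_Sp (h a (mem_cons_self a s)) (ih fun b hb => h b (mem_cons_of_mem hb))
    simpa [Nat.add_comm] using this

/-- The Frankl–Wilson polynomial for a set `G`. -/
def fG (p : ℕ) (G : Finset α) : Finset α → ZMod p :=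
  fun T => ∏ l ∈ range (p - 1), (((G ∩ T).card : ZMod p) - l)

lemma fG_mem_Sp {Ω G : Finset α} (hG : G ⊆ Ω) : fG p G ∈ Sp p Ω (p - 1) := by
  have : fG p G = ∏ l ∈ range (p - 1), (fun T => ((G ∩ T).card : ZMod p) + (-(l : ZMod p))) := by
    funext T
    simp [fG, Finset.prod_apply, sub_eq_add_neg]
  rw [this]
  have := prod_mem_Sp (p := p) (Ω := Ω) (range (p - 1))
    (fun l => (fun T => ((G ∩ T).card : ZMod p) + (-(l : ZMod p))))
    (fun l _ => affine_mem_Sp G hG _)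
  simpa using this

/-- The swallowing polynomials. -/
def gA (p : ℕ) (Ω I : Finset α) : Finset α → ZMod p :=
  fun T => mon p I T * (((T ∩ Ω).card : ZMod p) + 1)

lemma gA_mem_Sp {Ω I : Finset α} (hI : I ⊆ Ω) (hcard : I.card ≤ p - 2) :
    gA p Ω I ∈ Sp p Ω (p - 1) := by
  have hp2 : 2 ≤ p := (Fact.out : p.Prime).two_le
  have : gA p Ω I = (mon p I) * (fun T => ((Ω ∩ T).card : ZMod p) + 1) := by
    funext T
    simp [gA, inter_comm]
  rw [this]
  refine Sp_mono Ω (show (p - 2) + 1 ≤ p - 1 by omega) ?_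
  exact mul_mem_Sp (mon_mem_Sp hI hcard) (affine_mem_Sp Ω subset_rfl 1)

lemma natCast_pred : (((p - 1 : ℕ)) : ZMod p) = -1 := by
  have hp : 1 ≤ p := (Fact.out : p.Prime).one_le
  push_cast [Nat.cast_sub hp]
  simp

lemma natCast_ne_zero_of_lt {a : ℕ} (h0 : 0 < a) (h : a < p) : ((a : ZMod p)) ≠ 0 := by
  rw [Ne, ZMod.natCast_eq_zero_iff]
  intro hdvd
  exact absurd (Nat.le_of_dvd h0 hdvd) (by omega)

lemma fG_self {G : Finset α} (hk : ((G.card : ZMod p)) = -1) : fG p G G ≠ 0 := by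
  rw [fG, Finset.prod_ne_zero_iff]
  intro l hl
  rw [inter_self, hk, mem_range] at *
  have : (-1 : ZMod p) - l = -((l + 1 : ℕ) : ZMod p) := by push_cast; ring
  rw [this, neg_ne_zero]
  exact natCast_ne_zero_of_lt (by omega) (by omega)

lemma fG_other {G T : Finset α} (h : ((G ∩ T).card : ZMod p) ≠ -1) : fG p G T = 0 := by
  haveI : NeZero p := ⟨(Fact.out : p.Prime).pos.ne'⟩
  set x : ZMod p := ((G ∩ T).card : ZMod p) with hx
  have hval : ((x.val : ℕ) : ZMod p) = x := by
    rw [ZMod.natCast_val, ZMod.cast_id]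
  have hlt : x.val < p := ZMod.val_lt x
  have hne : x.val ≠ p - 1 := by
    intro heq
    apply h
    rw [← hval, heq, natCast_pred]
  refine Finset.prod_eq_zero (i := x.val) (Finset.mem_range.mpr (by omega)) ?_
  rw [← hx, hval, sub_self]

theorem abs_bound (Ω : Finset α) (𝓗 : Finset (Finset α))
    (hsub : ∀ G ∈ 𝓗, G ⊆ Ω)
    (hk : ∀ G ∈ 𝓗, ((G.card : ZMod p)) = -1)
    (hint : ∀ G ∈ 𝓗, ∀ G' ∈ 𝓗, G ≠ G' → ((G ∩ G').card : ZMod p) ≠ -1) :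
    𝓗.card ≤ Ω.card.choose (p - 1) := by
  classical
  have hp2 : 2 ≤ p := (Fact.out : p.Prime).two_le
  set 𝓘 : Finset (Finset α) := Ω.powerset.filter (fun I => I.card ≤ p - 2) with h𝓘
  set v : (↥𝓗 ⊕ ↥𝓘) → (Finset α → ZMod p) :=
    Sum.elim (fun G => fG p G.1) (fun I => gA p Ω I.1) with hv
  -- linear independence
  have li : LinearIndependent (ZMod p) v := by
    rw [Fintype.linearIndependent_iff]
    intro c hc
    -- evaluation helper
    have heval : ∀ T : Finset α,
        (∑ G : ↥𝓗, c (Sum.inl G) * fG p G.1 T) +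
        (∑ I : ↥𝓘, c (Sum.inr I) * gA p Ω I.1 T) = 0 := by
      intro T
      have h0 := congrFun hc T
      simpa [hv, Finset.sum_apply, Fintype.sum_sum_type] using h0
    have hA : ∀ G0 : ↥𝓗, c (Sum.inl G0) = 0 := by
      intro G0
      have h1 := heval G0.1
      have hzg : ∀ I : ↥𝓘, gA p Ω I.1 G0.1 = 0 := by
        intro I
        have hGΩ : G0.1 ∩ Ω = G0.1 := inter_eq_left.mpr (hsub _ G0.2)
        simp [gA, hGΩ, hk _ G0.2]
      have hsingle : (∑ G : ↥𝓗, c (Sum.inl G) * fG p G.1 G0.1)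
          = c (Sum.inl G0) * fG p G0.1 G0.1 := by
        refine Fintype.sum_eq_single G0 (fun G hG => ?_)
        have hne : G.1 ≠ G0.1 := fun h => hG (Subtype.ext h)
        rw [fG_other (hint _ G.2 _ G0.2 hne), mul_zero]
      rw [hsingle] at h1
      simp only [hzg, mul_zero, Finset.sum_const_zero, add_zero] at h1
      have := fG_self (p := p) (hk _ G0.2)
      rcases mul_eq_zero.mp h1 with h | h
      · exact h
      · exact absurd h this
    have hB : ∀ n : ℕ, ∀ I0 : ↥𝓘, I0.1.card = n → c (Sum.inr I0) = 0 := by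
      intro n
      induction n using Nat.strong_induction_on with
      | _ n IH =>
        intro I0 hn
        obtain ⟨hI0Ω, hI0c⟩ : I0.1 ⊆ Ω ∧ I0.1.card ≤ p - 2 := by
          have := I0.2
          simpa only [h𝓘, mem_filter, mem_powerset] using this
        have h1 := heval I0.1
        simp only [hA, zero_mul, Finset.sum_const_zero, zero_add] at h1
        have hsingle : (∑ I : ↥𝓘, c (Sum.inr I) * gA p Ω I.1 I0.1)
            = c (Sum.inr I0) * gA p Ω I0.1 I0.1 := by
          refine Fintype.sum_eq_single I0 (fun I hI => ?_)
          by_cases hss : I.1 ⊆ I0.1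
          · have hlt : I.1.card < n := by
              rw [← hn]
              exact card_lt_card (ssubset_of_ne_of_subset (fun h => hI (Subtype.ext h)) hss)
            rw [IH _ hlt I rfl, zero_mul]
          · simp [gA, mon, hss]
        rw [hsingle] at h1
        have hval : gA p Ω I0.1 I0.1 = ((I0.1.card + 1 : ℕ) : ZMod p) := by
          rw [gA, mon]
          simp [inter_eq_left.mpr hI0Ω]
        rw [hval] at h1
        have hne : (((I0.1.card + 1 : ℕ)) : ZMod p) ≠ 0 :=
          natCast_ne_zero_of_lt (by omega) (by omega)
        rcases mul_eq_zero.mp h1 with h | h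
        · exact h
        · exact absurd h hne
    intro i
    rcases i with G | I
    · exact hA G
    · exact hB I.1.card I rfl
  -- the spanning set
  set w : Finset (Finset α → ZMod p) :=
    (Ω.powerset.filter (fun I => I.card ≤ p - 1)).image (mon p) with hw
  have hrange : Set.range v ≤ Submodule.span (ZMod p) (↑w : Set (Finset α → ZMod p)) := by
    have hspan : Sp p Ω (p - 1) = Submodule.span (ZMod p) (↑w : Set (Finset α → ZMod p)) := by
      rw [hw, Sp]
      congr 1
      rw [coe_image]
      congr 1
      ext I
      simp [mem_powerset]
    rintro x ⟨i, rfl⟩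
    rw [← hspan]
    rcases i with G | I
    · exact fG_mem_Sp (hsub _ G.2)
    · have := I.2
      simp only [h𝓘, mem_filter, mem_powerset] at this
      exact gA_mem_Sp this.1 this.2
  have hcount := linearIndependent_le_span_aux' v li _ hrange
  rw [Fintype.card_sum, Fintype.card_coe, Fintype.card_coe] at hcount
  have hwcard : Fintype.card ↥(↑w : Set (Finset α → ZMod p)) ≤
      (Ω.powerset.filter (fun I => I.card ≤ p - 1)).card := by
    have : Fintype.card ↥(↑w : Set (Finset α → ZMod p)) = w.card := by
      simp
    rw [this]
    exact card_image_le
  -- splitting the big filter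
  have hsplit : (Ω.powerset.filter (fun I => I.card ≤ p - 1)).card
      = 𝓘.card + Ω.card.choose (p - 1) := by
    have hun : Ω.powerset.filter (fun I => I.card ≤ p - 1)
        = 𝓘 ∪ Ω.powersetCard (p - 1) := by
      ext I
      rw [powersetCard_eq_filter]
      simp only [h𝓘, mem_union, mem_filter, mem_powerset]
      constructor
      · rintro ⟨h1, h2⟩
        rcases Nat.lt_or_ge I.card (p - 1) with h | h
        · exact Or.inl ⟨h1, by omega⟩
        · exact Or.inr ⟨h1, by omega⟩
      · rintro (⟨h1, h2⟩ | ⟨h1, h2⟩) <;> exact ⟨h1, by omega⟩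
    have hdisj : Disjoint 𝓘 (Ω.powersetCard (p - 1)) := by
      rw [disjoint_left]
      intro I hI hI'
      simp only [h𝓘, mem_filter] at hI
      rw [mem_powersetCard] at hI'
      omega
    rw [hun, card_union_of_disjoint hdisj, card_powersetCard]
  have hfin : Fintype.card ↥(↑w : Set (Finset α → ZMod p)) = Fintype.card ↥w := by
    congr 1
  omega

end FWaux

/-- Frankl–Wilson: if p is prime and 𝓕 is a family of 2p-element subsets of a
4p-element set such that no two distinct members intersect in exactly p elements,
then |𝓕| ≤ (1/2)·C(4p, p). -/
theorem frankl_wilson_half_choose (p : ℕ) (hp : p.Prime)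
    (𝓕 : Finset (Finset (Fin (4 * p))))
    (hcard : ∀ F ∈ 𝓕, F.card = 2 * p)
    (hinter : ∀ F ∈ 𝓕, ∀ F' ∈ 𝓕, F ≠ F' → (F ∩ F').card ≠ p) :
    (𝓕.card : ℝ) ≤ (1 / 2) * ((4 * p).choose p) := by
  classical
  haveI : Fact p.Prime := ⟨hp⟩
  have hp2 : 2 ≤ p := hp.two_le
  have h4p : 0 < 4 * p := by omega
  set z : Fin (4 * p) := ⟨0, h4p⟩ with hz
  have hcardFin : Fintype.card (Fin (4 * p)) = 4 * p := Fintype.card_fin _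
  set cmap : Finset (Fin (4 * p)) → Finset (Fin (4 * p)) :=
    fun F => if z ∈ F then F else Fᶜ with hcmap
  set 𝓖 : Finset (Finset (Fin (4 * p))) := 𝓕.image cmap with h𝓖
  -- each fiber of cmap has at most 2 elements
  have hfiber : 𝓕.card ≤ 2 * 𝓖.card := by
    refine card_le_mul_card_image 𝓕 2 (fun b _ => ?_)
    have hsub : 𝓕.filter (fun F => cmap F = b) ⊆ {b, bᶜ} := by
      intro F hF
      rw [mem_filter] at hF
      rw [mem_insert, mem_singleton]
      rcases hF with ⟨_, hFb⟩
      by_cases hzF : z ∈ F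
      · left; rw [← hFb]; simp [hcmap, hzF]
      · right
        have : Fᶜ = b := by simpa [hcmap, hzF] using hFb
        rw [← this, compl_compl]
    calc (𝓕.filter (fun F => cmap F = b)).card ≤ ({b, bᶜ} : Finset _).card :=
          card_le_card hsub
      _ ≤ 2 := card_insert_le _ _ |>.trans (by simp)
  -- properties of members of 𝓖
  have hGmem : ∀ G ∈ 𝓖, z ∈ G ∧ G.card = 2 * p := by
    intro G hG
    rw [h𝓖, mem_image] at hG
    obtain ⟨F, hF, rfl⟩ := hG
    by_cases hzF : z ∈ F
    · simp [hcmap, hzF, hcard F hF]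
    · have : z ∈ Fᶜ := by simpa using hzF
      simp only [hcmap, hzF, if_false]
      refine ⟨this, ?_⟩
      rw [card_compl, hcardFin, hcard F hF]
      omega
  -- forbidden intersection transfers to 𝓖
  have hGint : ∀ G ∈ 𝓖, ∀ G' ∈ 𝓖, G ≠ G' → (G ∩ G').card ≠ p := by
    intro G hG G' hG' hne
    rw [h𝓖, mem_image] at hG hG'
    obtain ⟨F, hF, rfl⟩ := hG
    obtain ⟨F', hF', rfl⟩ := hG'
    have hFne : F ≠ F' := fun h => hne (by rw [h])
    have hFF' := hinter F hF F' hF' hFne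
    have hcF := hcard F hF
    have hcF' := hcard F' hF'
    have hin1 : (F ∩ F').card ≤ 2 * p := by
      rw [← hcF]; exact card_le_card inter_subset_left
    have hunion : (F ∪ F').card + (F ∩ F').card = 4 * p := by
      rw [card_union_add_card_inter, hcF, hcF']; ring
    have hsd1 : (F ∩ F'ᶜ).card = 2 * p - (F ∩ F').card := by
      have he : F ∩ F'ᶜ = F \ F' := by ext x; simp
      rw [he, ← hcF]
      have := card_inter_add_card_sdiff F F'
      omega
    have hsd2 : (Fᶜ ∩ F').card = 2 * p - (F ∩ F').card := by
      have he : Fᶜ ∩ F' = F' \ F := by ext x; simp [And.comm]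
      rw [he, ← hcF']
      have := card_inter_add_card_sdiff F' F
      rw [inter_comm F' F] at this
      omega
    have hsd3 : (Fᶜ ∩ F'ᶜ).card = (F ∩ F').card := by
      have he : Fᶜ ∩ F'ᶜ = (F ∪ F')ᶜ := by ext x; simp
      rw [he, card_compl, hcardFin]
      omega
    by_cases h1 : z ∈ F <;> by_cases h2 : z ∈ F' <;>
      simp only [hcmap, h1, h2, if_true, if_false] <;> omega
  -- strip the common point z
  set Ω : Finset (Fin (4 * p)) := univ.erase z with hΩ
  set 𝓗 : Finset (Finset (Fin (4 * p))) := 𝓖.image (fun G => G.erase z) with h𝓗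
  have hinj : Set.InjOn (fun G => G.erase z) (↑𝓖 : Set (Finset (Fin (4 * p)))) := by
    intro G hG G' hG' h
    have hzG := (hGmem G hG).1
    have hzG' := (hGmem G' hG').1
    rw [← insert_erase hzG, ← insert_erase hzG']
    simp only at h
    rw [h]
  have h𝓗card : 𝓗.card = 𝓖.card := card_image_of_injOn hinj
  have habs : 𝓗.card ≤ Ω.card.choose (p - 1) := by
    refine FWaux.abs_bound (p := p) Ω 𝓗 ?_ ?_ ?_
    · intro H hH
      rw [h𝓗, mem_image] at hH
      obtain ⟨G, hG, rfl⟩ := hH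
      intro x hx
      rw [mem_erase] at hx
      exact mem_erase.mpr ⟨hx.1, mem_univ x⟩
    · intro H hH
      rw [h𝓗, mem_image] at hH
      obtain ⟨G, hG, rfl⟩ := hH
      rw [card_erase_of_mem (hGmem G hG).1, (hGmem G hG).2]
      have : (2 * p - 1 : ℕ) = p + (p - 1) := by omega
      rw [this]
      push_cast [Nat.cast_sub (show 1 ≤ p by omega)]
      simp [ZMod.natCast_self]
    · intro H hH H' hH' hne
      rw [h𝓗, mem_image] at hH hH'
      obtain ⟨G, hG, rfl⟩ := hH
      obtain ⟨G', hG', rfl⟩ := hH'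
      have hGne : G ≠ G' := fun h => hne (by rw [h])
      have hzz : z ∈ G ∩ G' := mem_inter.mpr ⟨(hGmem G hG).1, (hGmem G' hG').1⟩
      have hinter_eq : G.erase z ∩ G'.erase z = (G ∩ G').erase z := by
        ext x; simp [mem_erase, mem_inter]; tauto
      rw [hinter_eq, card_erase_of_mem hzz]
      -- the intersection size is not divisible by p
      have hpos : 1 ≤ (G ∩ G').card := card_pos.mpr ⟨z, hzz⟩
      have hle : (G ∩ G').card ≤ 2 * p := by
        rw [← (hGmem G hG).2]; exact card_le_card inter_subset_left
      have hne2p : (G ∩ G').card ≠ 2 * p := by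
        intro h
        have h1 : G ∩ G' = G := eq_of_subset_of_card_le inter_subset_left
          (by rw [h, (hGmem G hG).2])
        have h2 : G ∩ G' = G' := eq_of_subset_of_card_le inter_subset_right
          (by rw [h, (hGmem G' hG').2])
        exact hGne (h1 ▸ h2)
      have hnep : (G ∩ G').card ≠ p := hGint G hG G' hG' hGne
      have hndvd : ¬ p ∣ (G ∩ G').card := by
        rintro ⟨k, hk⟩
        have hk1 : 1 ≤ k := by
          rcases Nat.eq_zero_or_pos k with h | h
          · subst h; rw [Nat.mul_zero] at hk; omega
          · exact h
        have hk2 : k < 2 := by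
          by_contra h
          push_neg at h
          have : 2 * p ≤ p * k := by
            calc 2 * p = p * 2 := by ring
            _ ≤ p * k := Nat.mul_le_mul_left p h
          omega
        interval_cases k <;> omega
      intro heq
      apply hndvd
      have : (((G ∩ G').card : ℕ) : ZMod p) = 0 := by
        have h1 : ((G ∩ G').card : ℕ) = ((G ∩ G').card - 1) + 1 := by omega
        rw [h1]
        push_cast
        rw [heq]
        ring
      exact (ZMod.natCast_eq_zero_iff _ _).mp this
  -- count
  have hΩcard : Ω.card = 4 * p - 1 := by
    rw [hΩ, card_erase_of_mem (mem_univ z), card_univ, hcardFin]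
  -- binomial identity: C(4p, p) = 4 * C(4p-1, p-1)
  have hbinom : (4 * p).choose p = 4 * ((4 * p - 1).choose (p - 1)) := by
    have h := Nat.add_one_mul_choose_eq (4 * p - 1) (p - 1)
    rw [show (4 * p - 1) + 1 = 4 * p by omega, show (p - 1) + 1 = p by omega] at h
    have h2 : (4 * ((4 * p - 1).choose (p - 1))) * p = (4 * p).choose p * p := by
      rw [← h]; ring
    exact (Nat.eq_of_mul_eq_mul_right (by omega) h2).symm
  have hfinal : 𝓕.card ≤ 2 * ((4 * p - 1).choose (p - 1)) := by
    calc 𝓕.card ≤ 2 * 𝓖.card := hfiber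
      _ = 2 * 𝓗.card := by rw [h𝓗card]
      _ ≤ 2 * ((4 * p - 1).choose (p - 1)) := by
          have := habs
          rw [hΩcard] at this
          omega
  calc (𝓕.card : ℝ) ≤ (2 * ((4 * p - 1).choose (p - 1)) : ℕ) := by exact_mod_cast hfinal
    _ = (1 / 2) * ((4 * ((4 * p - 1).choose (p - 1)) : ℕ) : ℝ) := by push_cast; ring
    _ = (1 / 2) * ((4 * p).choose p) := by rw [← hbinom]
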